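/- In the lattice of bi-leveled trees, the join of (t;T) and (s;S) is (sup{t,s}; U), where sup{t,s} is the join in the Tamari lattice and U is the largest upper order ideal of the node poset of sup{t,s} contained in T ∩ S. -/
import Mathlib



/-- Planar rooted binary trees. -/
inductive PBT : Type
  | leaf : PBT
  | node : PBT → PBT → PBT
deriving DecidableEq

namespace PBT

/-- Number of internal nodes. -/
def numNodes : PBT → ℕ
  | leaf => 0
  | node l r => numNodes l + numNodes r + 1

/-- Number of leaves. -/
def numLeaves : PBT → ℕ
  | leaf => 1
  | node l r => numLeaves l + numLeaves r

/-- A single left-to-right (Tamari) rotation somewhere in a tree. -/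
inductive Rot : PBT → PBT → Prop
  | here (a b c : PBT) : Rot (node (node a b) c) (node a (node b c))
  | left {l l' : PBT} (r : PBT) : Rot l l' → Rot (node l r) (node l' r)
  | right (l : PBT) {r r' : PBT} : Rot r r' → Rot (node l r) (node l r')

/-- The Tamari order: reflexive-transitive closure of rotations. -/
def tamariLE : PBT → PBT → Prop := Relation.ReflTransGen Rot

/-- Positions of internal nodes as paths from the root
(`false` = go left, `true` = go right). -/
def isNode : PBT → List Bool → Prop
  | leaf, _ => False
  | node _ _, [] => True
  | node l _, (false :: p) => isNode l p
  | node _ r, (true :: p) => isNode r p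

/-- 1-based left-to-right (in-order) index of a node position. -/
def idx : PBT → List Bool → ℕ
  | leaf, _ => 0
  | node l _, [] => numNodes l + 1
  | node l _, (false :: p) => idx l p
  | node l r, (true :: p) => numNodes l + 1 + idx r p

/-- `nodeLE t i j` : in the node poset of `t` (root maximal, a node is below all
of its ancestors), the node with in-order index `i` is ≤ the node with index `j`
(i.e. the position of `j` is a prefix of the position of `i`). -/
def nodeLE (t : PBT) (i j : ℕ) : Prop :=
  ∃ p q : List Bool, isNode t p ∧ isNode t q ∧ idx t p = i ∧ idx t q = j ∧ q <+: p

end PBT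

/-- Bi-leveled trees with `n` internal nodes: a planar binary tree together with
an upper order ideal `T` of its node poset (nodes indexed `1,…,n` left to right)
containing the leftmost node (index 1) as a minimal element. -/
structure BLT (n : ℕ) where
  t : PBT
  hn : t.numNodes = n
  T : Set ℕ
  hsub : T ⊆ Set.Icc 1 n
  hideal : ∀ i j, PBT.nodeLE t i j → i ∈ T → j ∈ T
  hone : (1 : ℕ) ∈ T
  hmin : ∀ i ∈ T, PBT.nodeLE t i 1 → i = 1

/-- The partial order on bi-leveled trees: `(s;S) ≤ (t;T)` iff `s ≤ t` in the
Tamari order and `T ⊆ S`. -/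
instance BLT.instPreorder (n : ℕ) : Preorder (BLT n) where
  le x y := PBT.tamariLE x.t y.t ∧ y.T ⊆ x.T
  le_refl x := ⟨Relation.ReflTransGen.refl, le_refl _⟩
  le_trans x y z h h' := ⟨h.1.trans h'.1, h'.2.trans h.2⟩

/-- Trees with `n` internal nodes, as a preorder under the Tamari order. -/
instance Yn.instPreorder (n : ℕ) : Preorder {t : PBT // t.numNodes = n} where
  le x y := PBT.tamariLE x.1 y.1
  le_refl x := Relation.ReflTransGen.refl
  le_trans x y z h h' := Relation.ReflTransGen.trans h h'



namespace PBT

theorem rot_numNodes {s t : PBT} (h : Rot s t) : s.numNodes = t.numNodes := by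
  induction h with
  | here a b c => simp [numNodes]; omega
  | left r _ ih => simp [numNodes, ih]
  | right l _ ih => simp [numNodes, ih]

theorem idx_pos : ∀ (t : PBT) (p : List Bool), isNode t p → 1 ≤ idx t p := by
  intro t
  induction t with
  | leaf => intro p h; exact h.elim
  | node l r ihl ihr =>
    intro p h
    match p with
    | [] => simp [idx]
    | false :: p => exact ihl p h
    | true :: p => simp only [idx] <;> omega

theorem idx_le : ∀ (t : PBT) (p : List Bool), isNode t p → idx t p ≤ numNodes t := by
  intro t
  induction t with
  | leaf => intro p h; exact h.elim
  | node l r ihl ihr =>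
    intro p h
    match p with
    | [] => simp [idx, numNodes]
    | false :: p => have := ihl p h; simp only [idx, numNodes] <;> omega
    | true :: p => have := ihr p h; simp only [idx, numNodes] <;> omega

theorem exists_idx : ∀ (t : PBT) (i : ℕ), 1 ≤ i → i ≤ numNodes t →
    ∃ p, isNode t p ∧ idx t p = i := by
  intro t
  induction t with
  | leaf => intro i h1 h2; simp [numNodes] at h2; omega
  | node l r ihl ihr =>
    intro i h1 h2
    rcases lt_trichotomy i (numNodes l + 1) with h | h | h
    · obtain ⟨p, hp, hi⟩ := ihl i h1 (by omega)
      exact ⟨false :: p, hp, hi⟩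
    · exact ⟨[], trivial, h.symm⟩
    · simp only [numNodes] at h2
      obtain ⟨p, hp, hi⟩ := ihr (i - (numNodes l + 1)) (by omega) (by omega)
      refine ⟨true :: p, hp, ?_⟩
      simp only [idx] <;> omega

/-- Ancestor relations `i ≤ j` with `i ≤ j` numerically persist downward in Tamari order
(single rotation step). -/
theorem rot_nodeLE_back {s t : PBT} (h : Rot s t) :
    ∀ i j, nodeLE t i j → i ≤ j → nodeLE s i j := by
  induction h with
  | here a b c =>
    rintro i j ⟨p, q, hp, hq, rfl, rfl, hpre⟩ hij
    rcases q with _ | ⟨_ | _, q₁⟩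
    · -- j is the root of t, j = numNodes a + 1
      rcases p with _ | ⟨_ | _, p₁⟩
      · exact ⟨[false], [false], trivial, trivial, rfl, rfl, List.prefix_refl _⟩
      · -- i in a
        refine ⟨false :: false :: p₁, [false], hp, trivial, rfl, rfl, ?_⟩
        exact ⟨false :: p₁, rfl⟩
      · -- i in (node b c): i > j, contradiction
        exfalso
        have := idx_pos (node b c) p₁ hp
        simp only [idx] at hij
        omega
    · -- j in a
      rcases p with _ | ⟨_ | _, p₁⟩
      · exact absurd hpre (by simp)
      · obtain ⟨-, hpre'⟩ := List.cons_prefix_cons.mp hpre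
        exact ⟨false :: false :: p₁, false :: false :: q₁, hp, hq, rfl, rfl,
          List.cons_prefix_cons.mpr ⟨rfl, List.cons_prefix_cons.mpr ⟨rfl, hpre'⟩⟩⟩
      · exact absurd (List.cons_prefix_cons.mp hpre).1 (by simp)
    · -- j in (node b c)
      rcases p with _ | ⟨_ | _, p₁⟩
      · exact absurd hpre (by simp)
      · exact absurd (List.cons_prefix_cons.mp hpre).1 (by simp)
      obtain ⟨-, hpre₁⟩ := List.cons_prefix_cons.mp hpre
      rcases q₁ with _ | ⟨_ | _, q₂⟩
      · -- j is root of (node b c): j = numNodes a + numNodes b + 2, root of s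
        rcases p₁ with _ | ⟨_ | _, p₂⟩
        · refine ⟨[], [], trivial, trivial, ?_, ?_, List.prefix_refl _⟩
          · simp only [idx, numNodes] <;> omega
          · simp only [idx, numNodes] <;> omega
        · -- i in b
          refine ⟨false :: true :: p₂, [], hp, trivial, ?_, ?_, List.nil_prefix⟩
          · simp only [idx, numNodes] <;> omega
          · simp only [idx, numNodes] <;> omega
        · -- i in c: i > j, contradiction
          exfalso
          have := idx_pos c p₂ hp
          simp only [idx] at hij
          omega
      · -- j in b
        rcases p₁ with _ | ⟨_ | _, p₂⟩
        · exact absurd hpre₁ (by simp)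
        · obtain ⟨-, hpre₂⟩ := List.cons_prefix_cons.mp hpre₁
          refine ⟨false :: true :: p₂, false :: true :: q₂, hp, hq, ?_, ?_,
            List.cons_prefix_cons.mpr ⟨rfl, List.cons_prefix_cons.mpr ⟨rfl, hpre₂⟩⟩⟩
          · simp only [idx] <;> omega
          · simp only [idx] <;> omega
        · exact absurd (List.cons_prefix_cons.mp hpre₁).1 (by simp)
      · -- j in c
        rcases p₁ with _ | ⟨_ | _, p₂⟩
        · exact absurd hpre₁ (by simp)
        · exact absurd (List.cons_prefix_cons.mp hpre₁).1 (by simp)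
        · obtain ⟨-, hpre₂⟩ := List.cons_prefix_cons.mp hpre₁
          refine ⟨true :: p₂, true :: q₂, hp, hq, ?_, ?_, List.cons_prefix_cons.mpr ⟨rfl, hpre₂⟩⟩
          · simp only [idx, numNodes] <;> omega
          · simp only [idx, numNodes] <;> omega
  | @left l l' r hrot ih =>
    rintro i j ⟨p, q, hp, hq, rfl, rfl, hpre⟩ hij
    have hnn := rot_numNodes hrot
    rcases q with _ | ⟨_ | _, q₁⟩
    · -- j is the root
      rcases p with _ | ⟨_ | _, p₁⟩
      · exact ⟨[], [], trivial, trivial, by simp [idx, hnn], by simp [idx, hnn],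
          List.prefix_refl _⟩
      · -- i in l'
        obtain ⟨p₂, hp₂, hi₂⟩ := exists_idx l (idx l' p₁) (idx_pos _ _ hp)
          (hnn ▸ idx_le _ _ hp)
        exact ⟨false :: p₂, [], hp₂, trivial, hi₂, by simp [idx, hnn], List.nil_prefix⟩
      · exfalso
        have := idx_pos r p₁ hp
        simp only [idx] at hij
        omega
    · -- j in l'
      rcases p with _ | ⟨_ | _, p₁⟩
      · exact absurd hpre (by simp)
      · obtain ⟨-, hpre'⟩ := List.cons_prefix_cons.mp hpre
        obtain ⟨p₂, q₂, hp₂, hq₂, hi₂, hj₂, hpre₂⟩ :=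
          ih _ _ ⟨p₁, q₁, hp, hq, rfl, rfl, hpre'⟩ hij
        exact ⟨false :: p₂, false :: q₂, hp₂, hq₂, hi₂, hj₂, List.cons_prefix_cons.mpr ⟨rfl, hpre₂⟩⟩
      · exact absurd (List.cons_prefix_cons.mp hpre).1 (by simp)
    · -- j in r
      rcases p with _ | ⟨_ | _, p₁⟩
      · exact absurd hpre (by simp)
      · exact absurd (List.cons_prefix_cons.mp hpre).1 (by simp)
      · obtain ⟨-, hpre'⟩ := List.cons_prefix_cons.mp hpre
        refine ⟨true :: p₁, true :: q₁, hp, hq, ?_, ?_, List.cons_prefix_cons.mpr ⟨rfl, hpre'⟩⟩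
        · simp only [idx] <;> omega
        · simp only [idx] <;> omega
  | @right l r r' hrot ih =>
    rintro i j ⟨p, q, hp, hq, rfl, rfl, hpre⟩ hij
    rcases q with _ | ⟨_ | _, q₁⟩
    · rcases p with _ | ⟨_ | _, p₁⟩
      · exact ⟨[], [], trivial, trivial, rfl, rfl, List.prefix_refl _⟩
      · exact ⟨false :: p₁, [], hp, trivial, rfl, rfl, List.nil_prefix⟩
      · exfalso
        have := idx_pos r' p₁ hp
        simp only [idx] at hij
        omega
    · rcases p with _ | ⟨_ | _, p₁⟩
      · exact absurd hpre (by simp)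
      · obtain ⟨-, hpre'⟩ := List.cons_prefix_cons.mp hpre
        exact ⟨false :: p₁, false :: q₁, hp, hq, rfl, rfl, List.cons_prefix_cons.mpr ⟨rfl, hpre'⟩⟩
      · exact absurd (List.cons_prefix_cons.mp hpre).1 (by simp)
    · rcases p with _ | ⟨_ | _, p₁⟩
      · exact absurd hpre (by simp)
      · exact absurd (List.cons_prefix_cons.mp hpre).1 (by simp)
      · obtain ⟨-, hpre'⟩ := List.cons_prefix_cons.mp hpre
        have hnn := rot_numNodes hrot
        have hi := idx_pos _ _ hp
        have hj := idx_pos _ _ hq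
        simp only [idx] at hij
        obtain ⟨p₂, q₂, hp₂, hq₂, hi₂, hj₂, hpre₂⟩ :=
          ih _ _ ⟨p₁, q₁, hp, hq, rfl, rfl, hpre'⟩ (by omega)
        refine ⟨true :: p₂, true :: q₂, hp₂, hq₂, ?_, ?_, List.cons_prefix_cons.mpr ⟨rfl, hpre₂⟩⟩
        · simp only [idx] <;> omega
        · simp only [idx] <;> omega
/-- Ancestor relations with `j ≤ i` persist upward in Tamari order (single step). -/
theorem rot_nodeLE_forward {s t : PBT} (h : Rot s t) :
    ∀ i j, nodeLE s i j → j ≤ i → nodeLE t i j := by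
  induction h with
  | here a b c =>
    rintro i j ⟨p, q, hp, hq, rfl, rfl, hpre⟩ hij
    rcases q with _ | ⟨_ | _, q₁⟩
    · -- j is the root of s
      rcases p with _ | ⟨_ | _, p₁⟩
      · refine ⟨[true], [true], trivial, trivial, ?_, ?_, List.prefix_refl _⟩
        · simp only [idx, numNodes] <;> omega
        · simp only [idx, numNodes] <;> omega
      · -- i in (node a b): i < j, contradiction
        exfalso
        have := idx_le (node a b) p₁ hp
        simp only [idx, numNodes] at hij this
        omega
      · -- i in c
        refine ⟨true :: true :: p₁, [true], hp, trivial, ?_, ?_,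
          List.cons_prefix_cons.mpr ⟨rfl, List.nil_prefix⟩⟩
        · simp only [idx, numNodes] <;> omega
        · simp only [idx, numNodes] <;> omega
    · -- j in (node a b)
      rcases p with _ | ⟨_ | _, p₁⟩
      · exact absurd hpre (by simp)
      swap
      · exact absurd (List.cons_prefix_cons.mp hpre).1 (by simp)
      obtain ⟨-, hpre₁⟩ := List.cons_prefix_cons.mp hpre
      rcases q₁ with _ | ⟨_ | _, q₂⟩
      · -- j is root of (node a b), i.e. j = numNodes a + 1, the root of t
        rcases p₁ with _ | ⟨_ | _, p₂⟩
        · exact ⟨[], [], trivial, trivial, by simp [idx], by simp [idx], List.prefix_refl _⟩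
        · -- i in a: i < j, contradiction
          exfalso
          have := idx_le a p₂ hp
          simp only [idx] at hij
          omega
        · -- i in b
          refine ⟨true :: false :: p₂, [], hp, trivial, ?_, ?_, List.nil_prefix⟩
          · simp only [idx, numNodes] <;> omega
          · simp only [idx, numNodes] <;> omega
      · -- j in a
        rcases p₁ with _ | ⟨_ | _, p₂⟩
        · exact absurd hpre₁ (by simp)
        · obtain ⟨-, hpre₂⟩ := List.cons_prefix_cons.mp hpre₁
          exact ⟨false :: p₂, false :: q₂, hp, hq, rfl, rfl,
            List.cons_prefix_cons.mpr ⟨rfl, hpre₂⟩⟩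
        · exact absurd (List.cons_prefix_cons.mp hpre₁).1 (by simp)
      · -- j in b
        rcases p₁ with _ | ⟨_ | _, p₂⟩
        · exact absurd hpre₁ (by simp)
        · exact absurd (List.cons_prefix_cons.mp hpre₁).1 (by simp)
        · obtain ⟨-, hpre₂⟩ := List.cons_prefix_cons.mp hpre₁
          refine ⟨true :: false :: p₂, true :: false :: q₂, hp, hq, ?_, ?_,
            List.cons_prefix_cons.mpr ⟨rfl, List.cons_prefix_cons.mpr ⟨rfl, hpre₂⟩⟩⟩
          · simp only [idx, numNodes] <;> omega
          · simp only [idx, numNodes] <;> omega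
    · -- j in c
      rcases p with _ | ⟨_ | _, p₁⟩
      · exact absurd hpre (by simp)
      · exact absurd (List.cons_prefix_cons.mp hpre).1 (by simp)
      · obtain ⟨-, hpre₁⟩ := List.cons_prefix_cons.mp hpre
        refine ⟨true :: true :: p₁, true :: true :: q₁, hp, hq, ?_, ?_,
          List.cons_prefix_cons.mpr ⟨rfl, List.cons_prefix_cons.mpr ⟨rfl, hpre₁⟩⟩⟩
        · simp only [idx, numNodes] <;> omega
        · simp only [idx, numNodes] <;> omega
  | @left l l' r hrot ih =>
    rintro i j ⟨p, q, hp, hq, rfl, rfl, hpre⟩ hij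
    have hnn := rot_numNodes hrot
    rcases q with _ | ⟨_ | _, q₁⟩
    · rcases p with _ | ⟨_ | _, p₁⟩
      · exact ⟨[], [], trivial, trivial, by simp [idx, hnn], by simp [idx, hnn],
          List.prefix_refl _⟩
      · exfalso
        have := idx_le l p₁ hp
        simp only [idx] at hij
        omega
      · refine ⟨true :: p₁, [], hp, trivial, ?_, ?_, List.nil_prefix⟩
        · simp only [idx] <;> omega
        · simp only [idx] <;> omega
    · rcases p with _ | ⟨_ | _, p₁⟩
      · exact absurd hpre (by simp)
      · obtain ⟨-, hpre'⟩ := List.cons_prefix_cons.mp hpre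
        obtain ⟨p₂, q₂, hp₂, hq₂, hi₂, hj₂, hpre₂⟩ :=
          ih _ _ ⟨p₁, q₁, hp, hq, rfl, rfl, hpre'⟩ hij
        exact ⟨false :: p₂, false :: q₂, hp₂, hq₂, hi₂, hj₂,
          List.cons_prefix_cons.mpr ⟨rfl, hpre₂⟩⟩
      · exact absurd (List.cons_prefix_cons.mp hpre).1 (by simp)
    · rcases p with _ | ⟨_ | _, p₁⟩
      · exact absurd hpre (by simp)
      · exact absurd (List.cons_prefix_cons.mp hpre).1 (by simp)
      · obtain ⟨-, hpre'⟩ := List.cons_prefix_cons.mp hpre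
        refine ⟨true :: p₁, true :: q₁, hp, hq, ?_, ?_,
          List.cons_prefix_cons.mpr ⟨rfl, hpre'⟩⟩
        · simp only [idx] <;> omega
        · simp only [idx] <;> omega
  | @right l r r' hrot ih =>
    rintro i j ⟨p, q, hp, hq, rfl, rfl, hpre⟩ hij
    have hnn := rot_numNodes hrot
    rcases q with _ | ⟨_ | _, q₁⟩
    · rcases p with _ | ⟨_ | _, p₁⟩
      · exact ⟨[], [], trivial, trivial, rfl, rfl, List.prefix_refl _⟩
      · exfalso
        have := idx_le l p₁ hp
        simp only [idx] at hij
        omega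
      · obtain ⟨p₂, hp₂, hi₂⟩ := exists_idx r' (idx r p₁) (idx_pos r p₁ hp)
          (hnn ▸ idx_le r p₁ hp)
        refine ⟨true :: p₂, [], hp₂, trivial, ?_, rfl, List.nil_prefix⟩
        simp only [idx] <;> omega
    · rcases p with _ | ⟨_ | _, p₁⟩
      · exact absurd hpre (by simp)
      · obtain ⟨-, hpre'⟩ := List.cons_prefix_cons.mp hpre
        exact ⟨false :: p₁, false :: q₁, hp, hq, rfl, rfl,
          List.cons_prefix_cons.mpr ⟨rfl, hpre'⟩⟩
      · exact absurd (List.cons_prefix_cons.mp hpre).1 (by simp)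
    · rcases p with _ | ⟨_ | _, p₁⟩
      · exact absurd hpre (by simp)
      · exact absurd (List.cons_prefix_cons.mp hpre).1 (by simp)
      · obtain ⟨-, hpre'⟩ := List.cons_prefix_cons.mp hpre
        simp only [idx] at hij
        obtain ⟨p₂, q₂, hp₂, hq₂, hi₂, hj₂, hpre₂⟩ :=
          ih _ _ ⟨p₁, q₁, hp, hq, rfl, rfl, hpre'⟩ (by omega)
        refine ⟨true :: p₂, true :: q₂, hp₂, hq₂, ?_, ?_,
          List.cons_prefix_cons.mpr ⟨rfl, hpre₂⟩⟩
        · simp only [idx] <;> omega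
        · simp only [idx] <;> omega

theorem tamari_nodeLE_back {s t : PBT} (h : tamariLE s t) :
    ∀ i j, nodeLE t i j → i ≤ j → nodeLE s i j := by
  induction h with
  | refl => exact fun i j hLE _ => hLE
  | tail _ hr ih => exact fun i j hLE hij => ih i j (rot_nodeLE_back hr i j hLE hij) hij

theorem tamari_nodeLE_forward {s t : PBT} (h : tamariLE s t) :
    ∀ i j, nodeLE s i j → j ≤ i → nodeLE t i j := by
  induction h with
  | refl => exact fun i j hLE _ => hLE
  | tail _ hr ih => exact fun i j hLE hij => rot_nodeLE_forward hr i j (ih i j hLE hij) hij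

end PBT

/-- In the lattice of bi-leveled trees, the join of `(t;T)` and `(s;S)` is
`(sup{t,s}; U)` where `sup{t,s}` is the join in the Tamari lattice and `U` is the
largest upper order ideal of the node poset of `sup{t,s}` contained in `T ∩ S`,
namely `U = {i | i is a node of sup{t,s} and every node j ≥ i lies in T ∩ S}`. -/
theorem BLT_join (n : ℕ) (x y : BLT n) (u : {t : PBT // t.numNodes = n})
    (hu : IsLUB {(⟨x.t, x.hn⟩ : {t : PBT // t.numNodes = n}), ⟨y.t, y.hn⟩} u)
    (z : BLT n) (hzt : z.t = u.1)
    (hzT : z.T = {i : ℕ | (∃ p : List Bool, PBT.isNode u.1 p ∧ PBT.idx u.1 p = i) ∧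
      ∀ j : ℕ, PBT.nodeLE u.1 i j → j ∈ x.T ∩ y.T}) :
    IsLUB {x, y} z := by
  obtain ⟨hub, hlub⟩ := hu
  have hxu : PBT.tamariLE x.t u.1 := hub (Set.mem_insert _ _)
  have hyu : PBT.tamariLE y.t u.1 := hub (Set.mem_insert_of_mem _ rfl)
  constructor
  · rintro w (rfl | rfl)
    · refine ⟨by rw [hzt]; exact hxu, ?_⟩
      intro i hi
      rw [hzT] at hi
      obtain ⟨⟨p, hp, hpi⟩, hall⟩ := hi
      exact (hall i ⟨p, p, hp, hp, hpi, hpi, List.prefix_refl _⟩).1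
    · refine ⟨by rw [hzt]; exact hyu, ?_⟩
      intro i hi
      rw [hzT] at hi
      obtain ⟨⟨p, hp, hpi⟩, hall⟩ := hi
      exact (hall i ⟨p, p, hp, hp, hpi, hpi, List.prefix_refl _⟩).2
  · intro w hw
    have hxw : x ≤ w := hw (Set.mem_insert _ _)
    have hyw : y ≤ w := hw (Set.mem_insert_of_mem _ rfl)
    have huw : PBT.tamariLE u.1 w.t := by
      refine hlub (a := (⟨w.t, w.hn⟩ : {t : PBT // t.numNodes = n})) ?_
      rintro a (rfl | rfl)
      · exact hxw.1
      · exact hyw.1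
    refine ⟨by rw [hzt]; exact huw, ?_⟩
    intro i hi
    rw [hzT]
    simp only [Set.mem_setOf_eq]
    refine ⟨?_, ?_⟩
    · have hicc := w.hsub hi
      exact PBT.exists_idx u.1 i hicc.1 (by rw [u.2]; exact hicc.2)
    · intro j hj
      rcases le_total i j with hij | hij
      · have hx : PBT.nodeLE x.t i j := PBT.tamari_nodeLE_back hxu i j hj hij
        have hy : PBT.nodeLE y.t i j := PBT.tamari_nodeLE_back hyu i j hj hij
        exact ⟨x.hideal i j hx (hxw.2 hi), y.hideal i j hy (hyw.2 hi)⟩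
      · have hwn : PBT.nodeLE w.t i j := PBT.tamari_nodeLE_forward huw i j hj hij
        have hjw : j ∈ w.T := w.hideal i j hwn hi
        exact ⟨hxw.2 hjw, hyw.2 hjw⟩
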